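/- Define g recursively by g(1) = 1 and g(m + 1) = 2^{g(m)} + g(m) for m ≥ 1. Then for every m ≥ 1, g(m) is the minimal value of n with f(n) = m; that is, f(g(m)) = m and f(n) ≠ m for all n with 1 ≤ n < g(m). -/

import Mathlib

/-- `f n` is the number of integers `k` with `1 ≤ k ≤ n` such that `k ≡ n (mod 2^k)`. -/
def f (n : ℕ) : ℕ := ((Finset.Icc 1 n).filter (fun k => n % 2 ^ k = k % 2 ^ k)).card

/-- `g 1 = 1` and `g (m + 1) = 2 ^ g m + g m` for `m ≥ 1`. -/
def g : ℕ → ℕ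
  | 0 => 0
  | 1 => 1
  | (m + 2) => 2 ^ g (m + 1) + g (m + 1)

lemma g_succ (m : ℕ) (hm : 1 ≤ m) : g (m + 1) = 2 ^ g m + g m := by
  cases m with
  | zero => omega
  | succ k => rfl

lemma g_pos : ∀ m, 1 ≤ m → 1 ≤ g m := by
  intro m hm
  induction m with
  | zero => omega
  | succ k ih =>
    cases Nat.eq_or_lt_of_le hm with
    | inl h => simp [← h, g]
    | inr h =>
      have hk : 1 ≤ k := by omega
      rw [g_succ k hk]
      have := ih hk
      have h2 : 1 ≤ 2 ^ g k := Nat.one_le_two_pow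
      omega

lemma g_lt_succ (m : ℕ) (hm : 1 ≤ m) : g m < g (m + 1) := by
  rw [g_succ m hm]
  have : 0 < 2 ^ g m := Nat.pow_pos (by norm_num)
  omega

lemma g_strictMono : ∀ a b : ℕ, 1 ≤ a → a < b → g a < g b := by
  intro a b ha hab
  induction b with
  | zero => omega
  | succ k ih =>
    rcases Nat.eq_or_lt_of_le (Nat.le_of_lt_succ hab) with h | h
    · exact h ▸ g_lt_succ a ha
    · exact (ih h).trans (g_lt_succ k (by omega))

lemma g_mono (a b : ℕ) (ha : 1 ≤ a) (hab : a ≤ b) : g a ≤ g b := by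
  rcases Nat.eq_or_lt_of_le hab with h | h
  · rw [h]
  · exact (g_strictMono a b ha h).le

lemma g_modeq : ∀ m j : ℕ, 1 ≤ j → j ≤ m → g m ≡ g j [MOD 2 ^ g j] := by
  intro m
  induction m with
  | zero => intro j hj hjm; omega
  | succ k ih =>
    intro j hj hjm
    rcases Nat.eq_or_lt_of_le hjm with h | h
    · rw [h]
    · have hjk : j ≤ k := by omega
      have hk : 1 ≤ k := by omega
      have h1 : g (k + 1) ≡ g k [MOD 2 ^ g k] := by
        rw [g_succ k hk]
        exact ((Nat.modEq_iff_dvd' (Nat.le_add_left _ _)).mpr (by simp)).symm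
      have h2 : g (k + 1) ≡ g k [MOD 2 ^ g j] :=
        h1.of_dvd (pow_dvd_pow 2 (g_mono j k hj hjk))
      exact h2.trans (ih j hj hjk)

lemma chain (n k k' : ℕ)
    (hk : n % 2 ^ k = k % 2 ^ k) (hk' : n % 2 ^ k' = k' % 2 ^ k')
    (h : k < k') : k + 2 ^ k ≤ k' := by
  have h1 : n ≡ k' [MOD 2 ^ k'] := hk'
  have h2 : n ≡ k' [MOD 2 ^ k] := h1.of_dvd (pow_dvd_pow 2 h.le)
  have h3 : k ≡ k' [MOD 2 ^ k] := (Nat.ModEq.symm hk).trans h2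
  have h4 : 2 ^ k ∣ k' - k := (Nat.modEq_iff_dvd' h.le).mp h3
  have h5 : 2 ^ k ≤ k' - k := Nat.le_of_dvd (by omega) h4
  omega

/-- Any subset of the satisfying set with at least `m ≥ 1` elements contains an
element `≥ g m`. -/
lemma exists_ge (n : ℕ) :
    ∀ m : ℕ, 1 ≤ m →
      ∀ T : Finset ℕ,
        T ⊆ (Finset.Icc 1 n).filter (fun k => n % 2 ^ k = k % 2 ^ k) →
        m ≤ T.card → ∃ k ∈ T, g m ≤ k := by
  intro m
  induction m with
  | zero => omega
  | succ p ih =>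
    intro _ T hT hcard
    rcases Nat.eq_zero_or_pos p with hp | hp
    · subst hp
      have hne : T.Nonempty := Finset.card_pos.mp (by omega)
      obtain ⟨k, hkT⟩ := hne
      refine ⟨k, hkT, ?_⟩
      have := hT hkT
      simp only [Finset.mem_filter, Finset.mem_Icc] at this
      simpa [g] using this.1.1
    · have hne : T.Nonempty := Finset.card_pos.mp (by omega)
      set K := T.max' hne with hK
      have hKT : K ∈ T := T.max'_mem hne
      have hsub : T.erase K ⊆ (Finset.Icc 1 n).filter
          (fun k => n % 2 ^ k = k % 2 ^ k) :=
        (Finset.erase_subset K T).trans hT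
      have hcard' : p ≤ (T.erase K).card := by
        rw [Finset.card_erase_of_mem hKT]; omega
      obtain ⟨k, hkT', hgk⟩ := ih hp (T.erase K) hsub hcard'
      have hkne : k ≠ K := Finset.ne_of_mem_erase hkT'
      have hkmem : k ∈ T := Finset.mem_of_mem_erase hkT'
      have hklt : k < K := lt_of_le_of_ne (T.le_max' k hkmem) hkne
      have hk1 := hT hkmem
      have hK1 := hT hKT
      simp only [Finset.mem_filter, Finset.mem_Icc] at hk1 hK1
      have hch : k + 2 ^ k ≤ K := chain n k K hk1.2 hK1.2 hklt
      refine ⟨K, hKT, ?_⟩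
      rw [g_succ p hp]
      have hpow : 2 ^ g p ≤ 2 ^ k := Nat.pow_le_pow_right (by norm_num) hgk
      omega

lemma f_lower (m : ℕ) (hm : 1 ≤ m) : m ≤ f (g m) := by
  unfold f
  have : (Finset.Icc 1 m).image g ⊆
      (Finset.Icc 1 (g m)).filter (fun k => g m % 2 ^ k = k % 2 ^ k) := by
    intro x hx
    simp only [Finset.mem_image, Finset.mem_Icc] at hx
    obtain ⟨j, ⟨hj1, hjm⟩, rfl⟩ := hx
    simp only [Finset.mem_filter, Finset.mem_Icc]
    refine ⟨⟨g_pos j hj1, g_mono j m hj1 hjm⟩, g_modeq m j hj1 hjm⟩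
  have hcard := Finset.card_le_card this
  have himg : ((Finset.Icc 1 m).image g).card = m := by
    rw [Finset.card_image_of_injOn, Nat.card_Icc]
    · omega
    · intro a ha b hb hab
      simp only [Finset.mem_Icc, Finset.coe_Icc, Set.mem_Icc] at ha hb
      by_contra hne
      rcases Nat.lt_or_ge a b with h | h
      · exact absurd hab (g_strictMono a b ha.1 h).ne
      · exact absurd hab.symm (g_strictMono b a hb.1 (by omega)).ne
  omega

theorem g_is_min_index (m : ℕ) (hm : 1 ≤ m) :
    f (g m) = m ∧ ∀ n : ℕ, 1 ≤ n → n < g m → f n ≠ m := by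
  constructor
  · have hlow := f_lower m hm
    by_contra hne
    have hlt : m < f (g m) := by omega
    obtain ⟨k, hkmem, hgk⟩ := exists_ge (g m) (m + 1) (by omega)
      ((Finset.Icc 1 (g m)).filter (fun k => (g m) % 2 ^ k = k % 2 ^ k))
      (Finset.Subset.refl _) hlt
    simp only [Finset.mem_filter, Finset.mem_Icc] at hkmem
    have : g m < g (m + 1) := g_lt_succ m hm
    omega
  · intro n hn hlt hfn
    obtain ⟨k, hkmem, hgk⟩ := exists_ge n m hm
      ((Finset.Icc 1 n).filter (fun k => n % 2 ^ k = k % 2 ^ k))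
      (Finset.Subset.refl _) (le_of_eq hfn.symm)
    simp only [Finset.mem_filter, Finset.mem_Icc] at hkmem
    omega
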